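/- The two-coordinate convolution NSC2 splits by parity: for f,g : 2^U × 2^U → ℤ, (f ⋄₂ g)(X,Y) = (f'₀ ⋄ g'₀ + f'₀ ⋄ g'₁ + f'₁ ⋄ g'₀ − f'₁ ⋄ g'₁)(X ⊎ Y), where primes denote the encodings on the doubled universe U' = U_X ⊎ U_Y with f'ₚ(X ⊎ Y) = f(X,Y)·[|Y| ≡ p mod 2] and g'_q(X ⊎ Y) = g(X,Y)·[|X| ≡ q mod 2]. -/

import Mathlib

/-- `I A B = (-1)^|{(a,b) ∈ A × B : a > b}|`. -/
def Isgn (A B : Finset ℕ) : ℤ :=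
  (-1) ^ ((A ×ˢ B).filter (fun p => p.2 < p.1)).card

/-- Non-commutative Subset Convolution. -/
def nsc (f g : Finset ℕ → ℤ) (X : Finset ℕ) : ℤ :=
  ∑ A ∈ X.powerset, f A * g (X \ A) * Isgn A (X \ A)

/-- Two-coordinate Non-commutative Subset Convolution (NSC2). -/
def nsc2 (f g : Finset ℕ → Finset ℕ → ℤ) (X Y : Finset ℕ) : ℤ :=
  ∑ A ∈ X.powerset, ∑ C ∈ Y.powerset,
    f A C * g (X \ A) (Y \ C) * Isgn A (X \ A) * Isgn C (Y \ C)

/-- The part of a subset of the doubled universe living in the lower copy `{0,…,n-1}`. -/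
def lowPart (n : ℕ) (Z : Finset ℕ) : Finset ℕ := Z.filter (· < n)

/-- The part living in the upper copy `{n,…,2n-1}`, translated back. -/
def highPart (n : ℕ) (Z : Finset ℕ) : Finset ℕ := (Z.filter (fun a => n ≤ a)).image (· - n)

/-- `f'ₚ(X ⊎ Y) = f(X,Y)·[|Y| ≡ p mod 2]` on the doubled universe. -/
def primeF (n : ℕ) (f : Finset ℕ → Finset ℕ → ℤ) (p : ℕ) (Z : Finset ℕ) : ℤ :=
  if (highPart n Z).card % 2 = p then f (lowPart n Z) (highPart n Z) else 0

/-- `g'_q(X ⊎ Y) = g(X,Y)·[|X| ≡ q mod 2]` on the doubled universe. -/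
def primeG (n : ℕ) (g : Finset ℕ → Finset ℕ → ℤ) (q : ℕ) (Z : Finset ℕ) : ℤ :=
  if (lowPart n Z).card % 2 = q then g (lowPart n Z) (highPart n Z) else 0

open Finset

variable {n : ℕ}

lemma lowPart_union {A : Finset ℕ} (hA : A ⊆ Finset.range n) (C : Finset ℕ) :
    lowPart n (A ∪ C.image (· + n)) = A := by
  ext a
  simp only [lowPart, mem_filter, mem_union, mem_image]
  constructor
  · rintro ⟨h | ⟨c, hc, rfl⟩, hlt⟩
    · exact h
    · omega
  · intro h
    exact ⟨Or.inl h, mem_range.mp (hA h)⟩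

lemma highPart_union {A : Finset ℕ} (hA : A ⊆ Finset.range n) (C : Finset ℕ) :
    highPart n (A ∪ C.image (· + n)) = C := by
  ext c
  simp only [highPart, mem_image, mem_filter, mem_union]
  constructor
  · rintro ⟨a, ⟨h | ⟨c', hc', rfl⟩, hle⟩, rfl⟩
    · have := mem_range.mp (hA h); omega
    · simpa using hc'
  · intro hc
    exact ⟨c + n, ⟨Or.inr ⟨c, hc, rfl⟩, Nat.le_add_left _ _⟩, by omega⟩

lemma union_parts {X Y Z : Finset ℕ} (hZ : Z ⊆ X ∪ Y.image (· + n))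
    (hX : X ⊆ Finset.range n) :
    lowPart n Z ∪ (highPart n Z).image (· + n) = Z := by
  ext a
  simp only [lowPart, highPart, mem_union, mem_image, mem_filter]
  constructor
  · rintro (⟨ha, _⟩ | ⟨c, ⟨b, ⟨hb, hle⟩, rfl⟩, rfl⟩)
    · exact ha
    · have : b - n + n = b := by omega
      rwa [this]
  · intro ha
    rcases (mem_union.mp (hZ ha)) with h | h
    · exact Or.inl ⟨ha, mem_range.mp (hX h)⟩
    · simp only [mem_image] at h
      obtain ⟨c, _, rfl⟩ := h
      exact Or.inr ⟨c, ⟨c + n, ⟨ha, Nat.le_add_left _ _⟩, by omega⟩, rfl⟩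

lemma sdiff_union_eq {X Y A C : Finset ℕ} (hX : X ⊆ Finset.range n) (hA : A ⊆ X) (hC : C ⊆ Y) :
    (X ∪ Y.image (· + n)) \ (A ∪ C.image (· + n))
      = (X \ A) ∪ (Y \ C).image (· + n) := by
  ext a
  simp only [mem_sdiff, mem_union, mem_image, not_or, not_exists, not_and]
  constructor
  · rintro ⟨h1 | ⟨c, hc, rfl⟩, h2, h3⟩
    · exact Or.inl ⟨h1, h2⟩
    · exact Or.inr ⟨c, ⟨hc, fun h => (h3 c h rfl).elim⟩, rfl⟩
  · rintro (⟨h1, h2⟩ | ⟨c, ⟨hc1, hc2⟩, rfl⟩)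
    · refine ⟨Or.inl h1, h2, fun c _ hc => ?_⟩
      have := mem_range.mp (hX h1); omega
    · refine ⟨Or.inr ⟨c, hc1, rfl⟩, fun h => ?_, fun c' hc' he => ?_⟩
      · have := mem_range.mp (hX (hA h)); omega
      · have : c' = c := by omega
        exact hc2 (this ▸ hc')

lemma Isgn_union {A B : Finset ℕ} (hA : A ⊆ Finset.range n) (hB : B ⊆ Finset.range n)
    (C D : Finset ℕ) :
    Isgn (A ∪ C.image (· + n)) (B ∪ D.image (· + n))
      = Isgn A B * Isgn C D * (-1) ^ (C.card * B.card) := by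
  classical
  set C' := C.image (· + n) with hC'
  set D' := D.image (· + n) with hD'
  have hAC' : Disjoint A C' := by
    rw [disjoint_left]; intro a ha hac
    have := mem_range.mp (hA ha)
    simp only [hC', mem_image] at hac; omega
  have hBD' : Disjoint B D' := by
    rw [disjoint_left]; intro a ha hac
    have := mem_range.mp (hB ha)
    simp only [hD', mem_image] at hac; omega
  have key : (((A ∪ C') ×ˢ (B ∪ D')).filter (fun p => p.2 < p.1)).card
      = ((A ×ˢ B).filter (fun p => p.2 < p.1)).card
        + ((C ×ˢ D).filter (fun p => p.2 < p.1)).card + C.card * B.card := by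
    rw [union_product, product_union, product_union, filter_union, filter_union, filter_union]
    have e1 : ((A ×ˢ D').filter (fun p => p.2 < p.1)) = ∅ := by
      rw [filter_eq_empty_iff]
      rintro ⟨a, d⟩ hm
      simp only [mem_product, hD', mem_image] at hm
      obtain ⟨ha, d0, _, rfl⟩ := hm
      have := mem_range.mp (hA ha)
      simp; omega
    have e2 : ((C' ×ˢ B).filter (fun p => p.2 < p.1)) = C' ×ˢ B := by
      rw [filter_eq_self]
      rintro ⟨c, b⟩ hm
      simp only [mem_product, hC', mem_image] at hm
      obtain ⟨⟨c0, _, rfl⟩, hb⟩ := hm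
      have := mem_range.mp (hB hb)
      simp; omega
    have e3 : ((C' ×ˢ D').filter (fun p => p.2 < p.1)).card
        = ((C ×ˢ D).filter (fun p => p.2 < p.1)).card := by
      apply Finset.card_nbij (fun p => (p.1 - n, p.2 - n))
      · rintro ⟨c, d⟩ hm
        change (c, d) ∈ ((C.image (· + n) ×ˢ D.image (· + n)).filter (fun p => p.2 < p.1)) at hm
        change (c - n, d - n) ∈ ((C ×ˢ D).filter (fun p => p.2 < p.1))
        simp only [mem_filter, mem_product, hC', hD', mem_image] at hm ⊢
        obtain ⟨⟨⟨c0, hc0, rfl⟩, ⟨d0, hd0, rfl⟩⟩, hlt⟩ := hm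
        constructor
        · constructor <;> simpa
        · simp; omega
      · rintro ⟨c, d⟩ hm ⟨c2, d2⟩ hm2 he
        simp only [Set.mem_setOf_eq, coe_filter, mem_product, hC', hD', mem_image] at hm hm2
        obtain ⟨⟨⟨c0, _, rfl⟩, ⟨d0, _, rfl⟩⟩, _⟩ := hm
        obtain ⟨⟨⟨c1, _, rfl⟩, ⟨d1, _, rfl⟩⟩, _⟩ := hm2
        simp only [Prod.mk.injEq] at he ⊢
        omega
      · rintro ⟨c, d⟩ hm
        simp only [Set.mem_setOf_eq, coe_filter, mem_product] at hm
        obtain ⟨⟨hc, hd⟩, hlt⟩ := hm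
        refine ⟨(c + n, d + n), ?_, by simp⟩
        simp only [Set.mem_setOf_eq, coe_filter, mem_product, hC', hD', mem_image]
        exact ⟨⟨⟨c, hc, rfl⟩, ⟨d, hd, rfl⟩⟩, by omega⟩
    have hCc : C'.card = C.card := card_image_of_injective _ (fun a b h => by omega)
    rw [card_union_of_disjoint, card_union_of_disjoint, card_union_of_disjoint, e1, e2, e3]
    · simp only [card_empty, card_product, hCc]; ring
    · exact disjoint_filter_filter (disjoint_product.mpr (Or.inr hBD'))
    · exact disjoint_filter_filter (disjoint_product.mpr (Or.inr hBD'))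
    · exact disjoint_union_left.mpr
        ⟨disjoint_union_right.mpr
          ⟨disjoint_filter_filter (disjoint_product.mpr (Or.inl hAC')),
           disjoint_filter_filter (disjoint_product.mpr (Or.inl hAC'))⟩,
         disjoint_union_right.mpr
          ⟨disjoint_filter_filter (disjoint_product.mpr (Or.inl hAC')),
           disjoint_filter_filter (disjoint_product.mpr (Or.inl hAC'))⟩⟩
  rw [Isgn, Isgn, Isgn, key, pow_add, pow_add]

lemma lowPart_subset {X Y Z : Finset ℕ} (hZ : Z ⊆ X ∪ Y.image (· + n)) :
    lowPart n Z ⊆ X := by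
  intro a ha
  simp only [lowPart, mem_filter] at ha
  rcases mem_union.mp (hZ ha.1) with h | h
  · exact h
  · simp only [mem_image] at h; omega

lemma highPart_subset {X Y Z : Finset ℕ} (hZ : Z ⊆ X ∪ Y.image (· + n))
    (hX : X ⊆ Finset.range n) :
    highPart n Z ⊆ Y := by
  intro c hc
  simp only [highPart, mem_image, mem_filter] at hc
  obtain ⟨a, ⟨ha, hle⟩, rfl⟩ := hc
  rcases mem_union.mp (hZ ha) with h | h
  · have := mem_range.mp (hX h); omega
  · simp only [mem_image] at h
    obtain ⟨c, hc, rfl⟩ := h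
    simpa using hc

lemma sum_powerset_double {X Y : Finset ℕ} (hX : X ⊆ Finset.range n)
    (F : Finset ℕ → ℤ) :
    ∑ Z ∈ (X ∪ Y.image (· + n)).powerset, F Z
      = ∑ A ∈ X.powerset, ∑ C ∈ Y.powerset, F (A ∪ C.image (· + n)) := by
  rw [← Finset.sum_product']
  apply Finset.sum_nbij' (fun Z => (lowPart n Z, highPart n Z))
    (fun p => p.1 ∪ p.2.image (· + n))
  · intro Z hZ
    rw [mem_powerset] at hZ
    rw [mem_product, mem_powerset, mem_powerset]
    exact ⟨lowPart_subset hZ, highPart_subset hZ hX⟩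
  · rintro ⟨A, C⟩ hp
    rw [mem_product, mem_powerset, mem_powerset] at hp
    rw [mem_powerset]
    exact union_subset_union hp.1 (image_subset_image hp.2)
  · intro Z hZ
    exact union_parts (mem_powerset.mp hZ) hX
  · rintro ⟨A, C⟩ hp
    rw [mem_product, mem_powerset, mem_powerset] at hp
    have hA := hp.1.trans hX
    simp only [lowPart_union hA, highPart_union hA]
  · intro Z hZ
    rw [union_parts (mem_powerset.mp hZ) hX]

theorem nsc2_parity_split (n : ℕ) (f g : Finset ℕ → Finset ℕ → ℤ)
    (X Y : Finset ℕ) (hX : X ⊆ Finset.range n) (hY : Y ⊆ Finset.range n) :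
    nsc2 f g X Y =
      nsc (primeF n f 0) (primeG n g 0) (X ∪ Y.image (· + n))
      + nsc (primeF n f 0) (primeG n g 1) (X ∪ Y.image (· + n))
      + nsc (primeF n f 1) (primeG n g 0) (X ∪ Y.image (· + n))
      - nsc (primeF n f 1) (primeG n g 1) (X ∪ Y.image (· + n)) := by
  unfold nsc
  rw [sum_powerset_double hX, sum_powerset_double hX, sum_powerset_double hX,
    sum_powerset_double hX]
  unfold nsc2
  rw [← Finset.sum_add_distrib, ← Finset.sum_add_distrib, ← Finset.sum_sub_distrib]
  refine Finset.sum_congr rfl fun A hA => ?_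
  rw [← Finset.sum_add_distrib, ← Finset.sum_add_distrib, ← Finset.sum_sub_distrib]
  refine Finset.sum_congr rfl fun C hC => ?_
  rw [mem_powerset] at hA hC
  have hAn : A ⊆ Finset.range n := hA.trans hX
  have hXAn : X \ A ⊆ Finset.range n := sdiff_subset.trans hX
  rw [sdiff_union_eq hX hA hC]
  unfold primeF primeG
  rw [lowPart_union hAn, highPart_union hAn, lowPart_union hXAn, highPart_union hXAn,
    Isgn_union hAn hXAn]
  rcases Nat.mod_two_eq_zero_or_one C.card with h1 | h1 <;>
    rcases Nat.mod_two_eq_zero_or_one (X \ A).card with h2 | h2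
  · have hs : ((-1 : ℤ)) ^ (C.card * (X \ A).card) = 1 :=
      Even.neg_one_pow ((Nat.even_iff.mpr h1).mul_right _)
    simp [h1, h2, hs]; ring
  · have hs : ((-1 : ℤ)) ^ (C.card * (X \ A).card) = 1 :=
      Even.neg_one_pow ((Nat.even_iff.mpr h1).mul_right _)
    simp [h1, h2, hs]; ring
  · have hs : ((-1 : ℤ)) ^ (C.card * (X \ A).card) = 1 :=
      Even.neg_one_pow ((Nat.even_iff.mpr h2).mul_left _)
    simp [h1, h2, hs]; ring
  · have hs : ((-1 : ℤ)) ^ (C.card * (X \ A).card) = -1 :=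
      Odd.neg_one_pow ((Nat.odd_iff.mpr h1).mul (Nat.odd_iff.mpr h2))
    simp [h1, h2, hs]; ring
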